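/- (Tangent stiffness matrix.) Let n be a nodal configuration with l i n ≠ 0 for every member i, and define the internal nodal force map F : (Fin n_n → EuclideanSpace ℝ (Fin 3)) → (Fin n_n → EuclideanSpace ℝ (Fin 3)) by (F n) p = Σ_i (x i n) * (C i p) • (h i n), i.e., F(n) = K(n) n. Then F is differentiable at n and its Fréchet derivative is the linear map δn ↦ (fun p => Σ_i (x i n) * (C i p) • (Σ_q (C i q) • δn q) + Σ_i (E i * A i * (l i n)⁻³ * ⟪h i n, Σ_q (C i q) • δn q⟫) * (C i p) • (h i n)); i.e., the tangent stiffness matrix is K_T = (Cᵀ x̂ C) ⊗ I₃ + A₁ Ê Â l̂⁻³ A₁ᵀ, the sum of the geometric stiffness K_G = (Cᵀ x̂ C) ⊗ I₃ and the material stiffness K_E = A₁ Ê Â l̂⁻³ A₁ᵀ. -/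

import Mathlib

open scoped RealInnerProductSpace
open Matrix

noncomputable section

/-- The Euclidean space of nodal vectors of a structure with `n_n` nodes. -/
abbrev NodalSpace (n_n : ℕ) := PiLp 2 (fun _ : Fin n_n => EuclideanSpace ℝ (Fin 3))

set_option maxHeartbeats 1000000 in
set_option synthInstance.maxHeartbeats 200000 in
/-- **Tangent stiffness matrix.** The internal nodal force map
`F(n) = K(n) n`, `(F n) p = Σ_i (x i n)(C i p) • (h i n)`, is differentiable at any
configuration with all member lengths nonzero, and its Fréchet derivative is the sum of the
geometric stiffness `K_G = (Cᵀ x̂ C) ⊗ I₃` and the material stiffness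
`K_E = A₁ Ê Â l̂⁻³ A₁ᵀ`: `K_T = K_G + K_E`. -/
theorem tangent_stiffness {n_n n_e : ℕ}
    (j k : Fin n_e → Fin n_n) (hjk : ∀ i, j i ≠ k i)
    (C : Matrix (Fin n_e) (Fin n_n) ℝ)
    (hC : ∀ i p, C i p = if p = k i then 1 else if p = j i then -1 else 0)
    (A E l0 : Fin n_e → ℝ)
    (hA : ∀ i, 0 < A i) (hE : ∀ i, 0 < E i) (hl0 : ∀ i, 0 < l0 i)
    (n : NodalSpace n_n)
    (hl : ∀ i, ‖∑ q, C i q • n q‖ ≠ 0) :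
    DifferentiableAt ℝ
      (fun n' : NodalSpace n_n =>
        ((WithLp.equiv 2 (∀ _ : Fin n_n, EuclideanSpace ℝ (Fin 3))).symm
          (fun p => ∑ i,
            ((E i * A i * (1 / l0 i - 1 / ‖∑ q, C i q • n' q‖)) * C i p) •
              (∑ q, C i q • n' q)) : NodalSpace n_n)) n ∧
    ∀ (δn : NodalSpace n_n) (p : Fin n_n),
      fderiv ℝ
        (fun n' : NodalSpace n_n =>
          ((WithLp.equiv 2 (∀ _ : Fin n_n, EuclideanSpace ℝ (Fin 3))).symm
            (fun p => ∑ i,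
              ((E i * A i * (1 / l0 i - 1 / ‖∑ q, C i q • n' q‖)) * C i p) •
                (∑ q, C i q • n' q)) : NodalSpace n_n)) n δn p =
        (∑ i, ((E i * A i * (1 / l0 i - 1 / ‖∑ q, C i q • n q‖)) * C i p) •
            (∑ q, C i q • δn q)) +
        ∑ i, (E i * A i * (‖∑ q, C i q • n q‖ ^ 3)⁻¹ *
            ⟪∑ q, C i q • n q, ∑ q, C i q • δn q⟫ * C i p) • (∑ q, C i q • n q) := by
  classical
  -- the member continuous linear maps
  set L : Fin n_e → (NodalSpace n_n →L[ℝ] EuclideanSpace ℝ (Fin 3)) :=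
    fun i => ∑ q, C i q • PiLp.proj 2 (fun _ : Fin n_n => EuclideanSpace ℝ (Fin 3)) q with hL
  have hLapp : ∀ i (v : NodalSpace n_n), L i v = ∑ q, C i q • v q := by
    intro i v
    simp [hL, ContinuousLinearMap.sum_apply]
  -- current member vectors
  set y : Fin n_e → EuclideanSpace ℝ (Fin 3) := fun i => ∑ q, C i q • n q with hy
  -- scalar force densities
  set x : Fin n_e → ℝ := fun i => E i * A i * (1 / l0 i - 1 / ‖y i‖) with hx
  -- derivative of the member vector map
  have hgL : ∀ i, (fun n' : NodalSpace n_n => ∑ q, C i q • n' q) = ⇑(L i) := by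
    intro i; funext v; rw [hLapp]
  have hgd : ∀ i, HasFDerivAt (fun n' : NodalSpace n_n => ∑ q, C i q • n' q) (L i) n := by
    intro i; rw [hgL i]; exact (L i).hasFDerivAt
  -- derivative of the norm of the member vector
  set Ni : Fin n_e → (NodalSpace n_n →L[ℝ] ℝ) :=
    fun i => ‖y i‖⁻¹ • ((innerSL ℝ (y i)).comp (L i)) with hNi
  have hynz : ∀ i, y i ≠ 0 := fun i => norm_ne_zero_iff.mp (hl i)
  have hnorm : ∀ i, HasFDerivAt (fun n' : NodalSpace n_n => ‖∑ q, C i q • n' q‖) (Ni i) n := by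
    intro i
    have hq := (hgd i).inner ℝ (hgd i)
    have hq0 : ⟪(∑ q, C i q • n q), (∑ q, C i q • n q)⟫ ≠ 0 :=
      inner_self_ne_zero.mpr (hynz i)
    have hsq := (Real.hasDerivAt_sqrt hq0).comp_hasFDerivAt n hq
    simp only [Function.comp_def] at hsq
    have hfun : (fun n' : NodalSpace n_n =>
        Real.sqrt ⟪(∑ q, C i q • n' q), (∑ q, C i q • n' q)⟫) =
        fun n' : NodalSpace n_n => ‖∑ q, C i q • n' q‖ := by
      funext v
      rw [real_inner_self_eq_norm_mul_norm, Real.sqrt_mul_self (norm_nonneg _)]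
    rw [hfun] at hsq
    refine hsq.congr_fderiv ?_
    symm
    ext δ
    have h3 : Real.sqrt ⟪(∑ q, C i q • n q), (∑ q, C i q • n q)⟫ = ‖y i‖ := by
      rw [real_inner_self_eq_norm_mul_norm, Real.sqrt_mul_self (norm_nonneg _)]
    simp only [hNi, ContinuousLinearMap.smul_apply, ContinuousLinearMap.comp_apply,
      innerSL_apply_apply, ContinuousLinearMap.coe_smul', Pi.smul_apply,
      fderivInnerCLM_apply, ContinuousLinearMap.prod_apply, h3, smul_eq_mul]
    rw [real_inner_comm (L i δ) (∑ q, C i q • n q)]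
    have hyn : ‖y i‖ ≠ 0 := hl i
    field_simp
    ring
  -- derivative of the scalar factor
  set ci : Fin n_e → (NodalSpace n_n →L[ℝ] ℝ) :=
    fun i => (E i * A i * (‖y i‖ ^ 3)⁻¹) • ((innerSL ℝ (y i)).comp (L i)) with hci
  have hs : ∀ i, HasFDerivAt
      (fun n' : NodalSpace n_n => E i * A i * (1 / l0 i - 1 / ‖∑ q, C i q • n' q‖))
      (ci i) n := by
    intro i
    have h1 : HasFDerivAt (fun n' : NodalSpace n_n => (‖∑ q, C i q • n' q‖)⁻¹)
        ((-(‖∑ q, C i q • n q‖ ^ 2)⁻¹ : ℝ) • Ni i) n :=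
      (hasDerivAt_inv (hl i)).comp_hasFDerivAt n (hnorm i)
    have h2 := (h1.const_mul (E i * A i)).const_sub (E i * A i * (1 / l0 i))
    have hfun : (fun n' : NodalSpace n_n =>
        E i * A i * (1 / l0 i - 1 / ‖∑ q, C i q • n' q‖)) =
        fun n' : NodalSpace n_n =>
          E i * A i * (1 / l0 i) - E i * A i * (‖∑ q, C i q • n' q‖)⁻¹ := by
      funext v; rw [one_div]; ring
    rw [hfun]
    refine h2.congr_fderiv ?_
    symm
    ext δ
    simp only [hci, hNi, ContinuousLinearMap.smul_apply, ContinuousLinearMap.comp_apply,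
      innerSL_apply_apply, ContinuousLinearMap.neg_apply, smul_eq_mul]
    have hyn : ‖y i‖ = ‖∑ q, C i q • n q‖ := rfl
    rw [hyn]
    field_simp
  -- derivative of each member force contribution
  set Di : Fin n_e → (NodalSpace n_n →L[ℝ] EuclideanSpace ℝ (Fin 3)) :=
    fun i => x i • L i + (ci i).smulRight (y i) with hDi
  have hGd : ∀ i, HasFDerivAt
      (fun n' : NodalSpace n_n =>
        (E i * A i * (1 / l0 i - 1 / ‖∑ q, C i q • n' q‖)) • (∑ q, C i q • n' q))
      (Di i) n := fun i => (hs i).smul (hgd i)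
  -- derivative of each nodal component
  set Dp : Fin n_n → (NodalSpace n_n →L[ℝ] EuclideanSpace ℝ (Fin 3)) :=
    fun p => ∑ i, C i p • Di i with hDp
  have hcomp : ∀ p, HasFDerivAt
      (fun n' : NodalSpace n_n => ∑ i,
        ((E i * A i * (1 / l0 i - 1 / ‖∑ q, C i q • n' q‖)) * C i p) •
          (∑ q, C i q • n' q))
      (Dp p) n := by
    intro p
    have hfun : (fun n' : NodalSpace n_n => ∑ i,
        ((E i * A i * (1 / l0 i - 1 / ‖∑ q, C i q • n' q‖)) * C i p) •
          (∑ q, C i q • n' q)) =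
        fun n' : NodalSpace n_n => ∑ i, C i p •
          ((E i * A i * (1 / l0 i - 1 / ‖∑ q, C i q • n' q‖)) • (∑ q, C i q • n' q)) := by
      funext v
      refine Finset.sum_congr rfl fun i _ => ?_
      rw [smul_smul, mul_comm]
    rw [hfun]
    exact HasFDerivAt.fun_sum fun i _ => (hGd i).const_smul (C i p)
  -- assemble the full derivative
  have hfpi : HasFDerivAt
      (fun n' : NodalSpace n_n => (fun p => ∑ i,
        ((E i * A i * (1 / l0 i - 1 / ‖∑ q, C i q • n' q‖)) * C i p) •
          (∑ q, C i q • n' q) : ∀ _ : Fin n_n, EuclideanSpace ℝ (Fin 3)))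
      (ContinuousLinearMap.pi Dp) n := hasFDerivAt_pi.mpr hcomp
  set Φ : (∀ _ : Fin n_n, EuclideanSpace ℝ (Fin 3)) ≃L[ℝ] NodalSpace n_n :=
    (PiLp.continuousLinearEquiv 2 ℝ (fun _ : Fin n_n => EuclideanSpace ℝ (Fin 3))).symm with hΦ
  have hF : HasFDerivAt
      (fun n' : NodalSpace n_n =>
        ((WithLp.equiv 2 (∀ _ : Fin n_n, EuclideanSpace ℝ (Fin 3))).symm
          (fun p => ∑ i,
            ((E i * A i * (1 / l0 i - 1 / ‖∑ q, C i q • n' q‖)) * C i p) •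
              (∑ q, C i q • n' q)) : NodalSpace n_n))
      ((Φ : (∀ _ : Fin n_n, EuclideanSpace ℝ (Fin 3)) →L[ℝ] NodalSpace n_n).comp
        (ContinuousLinearMap.pi Dp)) n :=
    Φ.toContinuousLinearMap.hasFDerivAt.comp n hfpi
  refine ⟨hF.differentiableAt, fun δn p => ?_⟩
  haveI : ContinuousSMul ℝ (NodalSpace n_n) := inferInstance
  have hFd := hF.fderiv
  rw [hFd]
  have happ : ((Φ : (∀ _ : Fin n_n, EuclideanSpace ℝ (Fin 3)) →L[ℝ] NodalSpace n_n).comp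
      (ContinuousLinearMap.pi Dp)) δn p = Dp p δn := rfl
  rw [happ, hDp, ContinuousLinearMap.sum_apply]
  have : ∀ i, (C i p • Di i) δn =
      ((E i * A i * (1 / l0 i - 1 / ‖∑ q, C i q • n q‖)) * C i p) • (∑ q, C i q • δn q) +
      (E i * A i * (‖∑ q, C i q • n q‖ ^ 3)⁻¹ *
        ⟪∑ q, C i q • n q, ∑ q, C i q • δn q⟫ * C i p) • (∑ q, C i q • n q) := by
    intro i
    simp only [ContinuousLinearMap.smul_apply, hDi, ContinuousLinearMap.add_apply,
      ContinuousLinearMap.smulRight_apply, hci, ContinuousLinearMap.comp_apply,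
      innerSL_apply_apply, smul_eq_mul, smul_add, smul_smul]
    rw [hLapp]
    have hyi : y i = ∑ q, C i q • n q := rfl
    have hxi : x i = E i * A i * (1 / l0 i - 1 / ‖∑ q, C i q • n q‖) := by
      simp only [hx]
      rfl
    rw [hyi, hxi]
    congr 1
    · ring_nf
    · ring_nf
  rw [Finset.sum_congr rfl fun i _ => this i, Finset.sum_add_distrib]

end
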